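/- Let (C_i, F_ij, θ_ijk) be a Cat-inverse system over a directed set I and let (C, Φ_i, Θ_ij) be its concrete inverse limit. Then (C, Φ_i, Θ_ij) is a source of the system, i.e. Θ_ij ∘ (F_ij Θ_jk) = Θ_ik ∘ (θ_ijk Φ_k) for all i < j < k, and it is the inverse limit: for every source (D, Ψ_i, Ξ_ij) with D a small category (i.e. functors Ψ_i : D → C_i and natural isomorphisms Ξ_ij : F_ij ∘ Ψ_j ⇒ Ψ_i satisfying Ξ_ij ∘ (F_ij Ξ_jk) = Ξ_ik ∘ (θ_ijk Ψ_k) for all i < j < k), there exists a unique functor G : D → C such that Φ_i ∘ G = Ψ_i for all i ∈ I and (Θ_ij)_{G(d)} = (Ξ_ij)_d for all i < j and every object d of D. -/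

import Mathlib

open CategoryTheory CategoryTheory.Limits

/-- A `Cat`-inverse system over a directed set `ι`: small categories `C i`,
functors `F h : C j ⥤ C i` for `h : i < j`, and natural isomorphisms
`theta hij hjk : F hjk ⋙ F hij ≅ F (hij.trans hjk)` satisfying the cocycle condition. -/
structure CatInvSys (ι : Type) [Preorder ι] where
  C : ι → Type
  [cat : ∀ i, SmallCategory (C i)]
  F : ∀ {i j : ι}, i < j → (C j ⥤ C i)
  theta : ∀ {i j k : ι} (hij : i < j) (hjk : j < k), F hjk ⋙ F hij ≅ F (hij.trans hjk)
  theta_comp :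
    ∀ {i j k l : ι} (hij : i < j) (hjk : j < k) (hkl : k < l) (x : C l),
      (F hij).map ((theta hjk hkl).hom.app x) ≫ (theta hij (hjk.trans hkl)).hom.app x =
        (theta hij hjk).hom.app ((F hkl).obj x) ≫ (theta (hij.trans hjk) hkl).hom.app x

attribute [instance] CatInvSys.cat

variable {ι : Type} [Preorder ι]

/-- An object of the concrete inverse limit: a family of objects `pt i ∈ C i` together with
isomorphisms `f h : F h (pt j) ⟶ pt i` compatible with the natural isomorphisms `theta`. -/
structure LimObj (S : CatInvSys ι) where
  pt : ∀ i, S.C i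
  f : ∀ {i j : ι} (h : i < j), (S.F h).obj (pt j) ⟶ pt i
  f_isIso : ∀ {i j : ι} (h : i < j), IsIso (f h)
  compat : ∀ {i j k : ι} (hij : i < j) (hjk : j < k),
    (S.F hij).map (f hjk) ≫ f hij = (S.theta hij hjk).hom.app (pt k) ≫ f (hij.trans hjk)

/-- A morphism in the concrete inverse limit: a compatible family of morphisms. -/
structure LimHom {S : CatInvSys ι} (x y : LimObj S) where
  s : ∀ i, x.pt i ⟶ y.pt i
  nat : ∀ {i j : ι} (h : i < j), (S.F h).map (s j) ≫ y.f h = x.f h ≫ s i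

theorem LimHom.ext' {S : CatInvSys ι} {x y : LimObj S} {φ ψ : LimHom x y}
    (h : ∀ i, φ.s i = ψ.s i) : φ = ψ := by
  have hs : φ.s = ψ.s := funext h
  cases φ with
  | mk s nat =>
    cases ψ with
    | mk s' nat' =>
      dsimp at hs
      subst hs
      rfl

/-- The concrete inverse limit category. -/
instance limCategory (S : CatInvSys ι) : Category (LimObj S) where
  Hom := LimHom
  id x := ⟨fun _ => 𝟙 _, by intro i j h; simp⟩
  comp φ ψ := ⟨fun i => φ.s i ≫ ψ.s i, by
    intro i j h
    rw [Functor.map_comp, Category.assoc, ψ.nat h, ← Category.assoc, φ.nat h, Category.assoc]⟩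
  id_comp φ := LimHom.ext' fun _ => Category.id_comp _
  comp_id φ := LimHom.ext' fun _ => Category.comp_id _
  assoc φ ψ χ := LimHom.ext' fun _ => Category.assoc _ _ _

@[simp] theorem LimHom.comp_s {S : CatInvSys ι} {x y z : LimObj S} (φ : x ⟶ y) (ψ : y ⟶ z)
    (i : ι) : (LimHom.s (φ ≫ ψ) i) = LimHom.s φ i ≫ LimHom.s ψ i := rfl

@[simp] theorem LimHom.id_s {S : CatInvSys ι} (x : LimObj S) (i : ι) :
    LimHom.s (𝟙 x) i = 𝟙 (x.pt i) := rfl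

/-- The projection functor `Φ i` from the concrete inverse limit to `C i`. -/
def Phi (S : CatInvSys ι) (i : ι) : LimObj S ⥤ S.C i where
  obj x := x.pt i
  map φ := LimHom.s φ i
  map_id _ := rfl
  map_comp _ _ := rfl

/-- The natural isomorphism `Θ h : Φ j ⋙ F h ≅ Φ i`, whose component at an object is
the structure isomorphism of that object. -/
noncomputable def Theta (S : CatInvSys ι) {i j : ι} (h : i < j) : Phi S j ⋙ S.F h ≅ Phi S i :=
  NatIso.ofComponents (fun x => @asIso _ _ _ _ (x.f h) (x.f_isIso h))
    (fun {x y} φ => LimHom.nat φ h)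

/-- `t` witnesses firmness of the object `x` of the concrete inverse limit. -/
def FirmWitness (S : CatInvSys ι) (x : LimObj S) (t : ι) : Prop :=
  ∀ (u : ι) (htu : t < u) (a b : S.C u),
    Function.Bijective (fun φ : (Phi S u).obj x ⟶ b => (S.F htu).map φ) ∧
    Function.Bijective (fun φ : a ⟶ (Phi S u).obj x => (S.F htu).map φ)

/-- An object of the concrete inverse limit is firm if it admits a firmness witness. -/
def Firm (S : CatInvSys ι) (x : LimObj S) : Prop := ∃ t : ι, FirmWitness S x t

theorem LimObj.ext'' {S : CatInvSys ι} {x y : LimObj S}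
    (hpt : x.pt = y.pt)
    (hf : ∀ {i j : ι} (h : i < j), HEq (x.f h) (y.f h)) : x = y := by
  cases x with
  | mk pt f fi comp =>
    cases y with
    | mk pt' f' fi' comp' =>
      dsimp at hpt
      subst hpt
      have hff : @f = @f' := by
        funext i j h
        exact eq_of_heq (hf h)
      subst hff
      rfl

theorem eqToHom_s {S : CatInvSys ι} {x y : LimObj S} (h : x = y) (i : ι) :
    LimHom.s (eqToHom h) i = eqToHom (congrArg (fun z => LimObj.pt z i) h) := by
  subst h; rfl

theorem Theta_app {S : CatInvSys ι} {i j : ι} (h : i < j) (x : LimObj S) :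
    (Theta S h).hom.app x = x.f h := rfl

/-- The concrete inverse limit of a `Cat`-inverse system is a source of the system and is
its inverse limit: it satisfies the source compatibility condition, and for every small
source `(D, Ψ, Ξ)` there is a unique functor `G : D ⥤ C` with `G ⋙ Φ i = Ψ i` for all `i`
and `(Θ h) (G d) = (Ξ h) d` for all `h : i < j` and objects `d` of `D`. -/
theorem concrete_inverse_limit_is_limit {ι : Type} [Preorder ι] [IsDirected ι (· ≤ ·)]
    (S : CatInvSys ι) :
    (∀ {i j k : ι} (hij : i < j) (hjk : j < k) (x : LimObj S),
      (S.F hij).map ((Theta S hjk).hom.app x) ≫ (Theta S hij).hom.app x =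
        (S.theta hij hjk).hom.app ((Phi S k).obj x) ≫ (Theta S (hij.trans hjk)).hom.app x) ∧
    (∀ (D : Type) [SmallCategory D] (Ψ : ∀ i : ι, D ⥤ S.C i)
      (Ξ : ∀ {i j : ι} (h : i < j), Ψ j ⋙ S.F h ≅ Ψ i),
      (∀ {i j k : ι} (hij : i < j) (hjk : j < k) (d : D),
        (S.F hij).map ((Ξ hjk).hom.app d) ≫ (Ξ hij).hom.app d =
          (S.theta hij hjk).hom.app ((Ψ k).obj d) ≫ (Ξ (hij.trans hjk)).hom.app d) →
      ∃! G : D ⥤ LimObj S,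
        (∀ i : ι, G ⋙ Phi S i = Ψ i) ∧
        (∀ {i j : ι} (h : i < j) (d : D),
          HEq ((Theta S h).hom.app (G.obj d)) ((Ξ h).hom.app d))) := by
  constructor
  · intro i j k hij hjk x
    exact x.compat hij hjk
  · intro D _ Ψ Ξ hΞ
    refine ⟨{ obj := fun d =>
                { pt := fun i => (Ψ i).obj d
                  f := fun {i j} h => (Ξ h).hom.app d
                  f_isIso := fun {i j} h => inferInstance
                  compat := fun {i j k} hij hjk => hΞ hij hjk d }
              map := fun {d d'} φ =>
                { s := fun i => (Ψ i).map φ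
                  nat := fun {i j} h => (Ξ h).hom.naturality φ }
              map_id := fun d => LimHom.ext' fun i => (Ψ i).map_id d
              map_comp := fun φ ψ => LimHom.ext' fun i => (Ψ i).map_comp φ ψ }, ?_, ?_⟩
    · constructor
      · intro i
        refine CategoryTheory.Functor.ext (fun d => rfl) (fun d d' φ => ?_)
        simp
        change _ = 𝟙 _ ≫ _ ≫ 𝟙 _
        rw [Category.id_comp]
        exact (Category.comp_id ((Ψ i).map φ)).symm
      · intro i j h d
        exact HEq.rfl
    · rintro G' ⟨hG1, hG2⟩
      have hobj : ∀ d, G'.obj d =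
          ({ pt := fun i => (Ψ i).obj d
             f := fun {i j} h => (Ξ h).hom.app d
             f_isIso := fun {i j} h => inferInstance
             compat := fun {i j k} hij hjk => hΞ hij hjk d } : LimObj S) := by
        intro d
        refine LimObj.ext'' ?_ ?_
        · funext i
          exact Functor.congr_obj (hG1 i) d
        · intro i j h
          have := hG2 h d
          rw [Theta_app] at this
          exact this
      refine CategoryTheory.Functor.ext hobj (fun d d' φ => ?_)
      refine LimHom.ext' fun i => ?_
      have hmap := Functor.congr_hom (hG1 i) φ
      dsimp [Phi] at hmap
      rw [hmap]
      rw [LimHom.comp_s, LimHom.comp_s, eqToHom_s, eqToHom_s]
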